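/- Consider the network identity-expression game on N players with a directed network given by neighbor sets η(i) ⊆ {1,…,N}\{i}, utilities u_i(X) = −‖x_i − x̄_{η(i)}‖² − λ·ñ_i(X), and λ > 1. If there exist three distinct players i₁, i₂, i₃ with η(i₁) = {i₂}, η(i₂) = {i₃}, and η(i₃) = {i₁}, then the game has no pure strategy Nash equilibrium, regardless of the strategies and neighbor sets of the remaining players. -/
import Mathlib


open Finset

/-- Squared Euclidean norm of a real vector. -/
noncomputable def sqnorm {d : ℕ} (v : Fin d → ℝ) : ℝ := ∑ k, (v k) ^ 2

/-- Mean strategy of player `i`'s neighbors, computed coordinatewise in ℝ. -/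
noncomputable def nbrMean {N d : ℕ} (η : Fin N → Finset (Fin N))
    (X : Fin N → Fin d → ℤ) (i : Fin N) : Fin d → ℝ :=
  fun k => (∑ j ∈ η i, (X j k : ℝ)) / (η i).card

/-- Number of `i`'s neighbors adopting the same strategy as `i`. -/
def nTilde {N d : ℕ} (η : Fin N → Finset (Fin N))
    (X : Fin N → Fin d → ℤ) (i : Fin N) : ℕ :=
  ((η i).filter (fun j => X j = X i)).card

/-- Network utility: `u_i(X) = -‖x_i - x̄_{η(i)}‖² - λ ñ_i(X)`. -/
noncomputable def netUtility {N d : ℕ} (lam : ℝ) (η : Fin N → Finset (Fin N))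
    (X : Fin N → Fin d → ℤ) (i : Fin N) : ℝ :=
  - sqnorm (fun k => (X i k : ℝ) - nbrMean η X i k) - lam * nTilde η X i

lemma util_singleton {N d : ℕ} (lam : ℝ) (η : Fin N → Finset (Fin N))
    (X : Fin N → Fin d → ℤ) (i j : Fin N) (h : η i = {j}) :
    netUtility lam η X i =
      -(∑ k, ((X i k : ℝ) - X j k) ^ 2) - lam * (if X j = X i then 1 else 0) := by
  unfold netUtility sqnorm nbrMean nTilde
  rw [h]
  simp [Finset.filter_singleton]
  split_ifs <;> simp

lemma parity_of_sqsum_one {d : ℕ} (a : Fin d → ℤ) (h : ∑ k, (a k) ^ 2 = 1) :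
    ((∑ k, a k : ℤ) : ZMod 2) = 1 := by
  have : ((∑ k, a k : ℤ) : ZMod 2) = ((∑ k, (a k)^2 : ℤ) : ZMod 2) := by
    push_cast
    apply Finset.sum_congr rfl
    intro k _
    have : (((a k : ℤ)) : ZMod 2) ^ 2 = ((a k : ℤ) : ZMod 2) := by
      have := ZMod.pow_card ((a k : ℤ) : ZMod 2)
      simpa using this
    rw [this]
  rw [this, h]
  norm_num

/-- If the directed social network contains three distinct players forming a directed
3-cycle of sole observation (`η(i₁) = {i₂}`, `η(i₂) = {i₃}`, `η(i₃) = {i₁}`), then with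
`λ > 1` the network identity-expression game has no pure strategy Nash equilibrium,
regardless of the strategies and neighbor sets of the remaining players. -/
theorem no_pure_nash_of_three_cycle {N d : ℕ} (hd : 1 ≤ d)
    (η : Fin N → Finset (Fin N))
    (hηne : ∀ i, (η i).Nonempty) (hηirr : ∀ i, i ∉ η i)
    (lam : ℝ) (hlam : 1 < lam)
    (i₁ i₂ i₃ : Fin N) (h12 : i₁ ≠ i₂) (h13 : i₁ ≠ i₃) (h23 : i₂ ≠ i₃)
    (hcyc1 : η i₁ = {i₂}) (hcyc2 : η i₂ = {i₃}) (hcyc3 : η i₃ = {i₁}) :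
    ¬ ∃ X : Fin N → Fin d → ℤ,
      ∀ (i : Fin N) (x' : Fin d → ℤ),
        netUtility lam η (Function.update X i x') i ≤ netUtility lam η X i := by
  rintro ⟨X, hX⟩
  set k0 : Fin d := ⟨0, hd⟩ with hk0
  -- Key: for any player i with sole neighbor j ≠ i, in equilibrium the squared
  -- distance between their strategies is exactly 1.
  have key : ∀ i j : Fin N, j ≠ i → η i = {j} →
      ∑ k, (X i k - X j k) ^ 2 = 1 := by
    intro i j hji h
    set x' : Fin d → ℤ := fun k => X j k + if k = k0 then 1 else 0 with hx'
    have hne : x' ≠ X j := by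
      intro hc
      have := congrFun hc k0
      simp [hx'] at this
    have h1 := hX i x'
    have hupd : Function.update X i x' j = X j := Function.update_of_ne hji _ X
    have hupdi : Function.update X i x' i = x' := Function.update_self i x' X
    rw [util_singleton lam η (Function.update X i x') i j h,
        util_singleton lam η X i j h, hupd, hupdi] at h1
    rw [if_neg (fun hc => hne hc.symm)] at h1
    have hsum1 : (∑ k, ((x' k : ℝ) - X j k) ^ 2) = 1 := by
      have : ∀ k, ((x' k : ℝ) - X j k) = if k = k0 then 1 else 0 := by
        intro k
        by_cases hk : k = k0 <;> simp [hx', hk]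
      simp only [this]
      simp [apply_ite (fun x : ℝ => x ^ 2), Finset.sum_ite_eq']
    rw [hsum1] at h1
    -- h1 : -1 - lam*0 ≤ -(S) - lam * t
    set S : ℝ := ∑ k, ((X i k : ℝ) - X j k) ^ 2 with hS
    have hS0 : 0 ≤ S := Finset.sum_nonneg fun k _ => sq_nonneg _
    have hXne : X j ≠ X i := by
      intro hc
      rw [if_pos hc] at h1
      linarith
    rw [if_neg hXne] at h1
    -- so S ≤ 1
    have hle : S ≤ 1 := by linarith
    -- S is the cast of the integer sum
    have hcast : S = ((∑ k, (X i k - X j k) ^ 2 : ℤ) : ℝ) := by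
      rw [hS]; push_cast
      exact Finset.sum_congr rfl fun k _ => by ring
    have hzle : (∑ k, (X i k - X j k) ^ 2 : ℤ) ≤ 1 := by
      have := hle
      rw [hcast] at this
      exact_mod_cast this
    have hnz : ∃ k, X i k - X j k ≠ 0 := by
      by_contra hc
      push_neg at hc
      apply hXne
      funext k
      have := hc k
      omega
    obtain ⟨k, hk⟩ := hnz
    have h1le : (1 : ℤ) ≤ ∑ k, (X i k - X j k) ^ 2 := by
      calc (1:ℤ) ≤ (X i k - X j k)^2 := by
            rcases lt_or_gt_of_ne hk with h | h <;> nlinarith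
        _ ≤ ∑ k, (X i k - X j k) ^ 2 :=
          Finset.single_le_sum (f := fun k => (X i k - X j k) ^ 2)
            (fun k _ => sq_nonneg _) (Finset.mem_univ k)
    omega
  have e12 := key i₁ i₂ (Ne.symm h12) hcyc1
  have e23 := key i₂ i₃ (Ne.symm h23) hcyc2
  have e31 := key i₃ i₁ h13 hcyc3
  have p12 := parity_of_sqsum_one _ e12
  have p23 := parity_of_sqsum_one _ e23
  have p31 := parity_of_sqsum_one _ e31
  have hzero : (∑ k, (X i₁ k - X i₂ k)) + (∑ k, (X i₂ k - X i₃ k))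
      + (∑ k, (X i₃ k - X i₁ k)) = 0 := by
    rw [← Finset.sum_add_distrib, ← Finset.sum_add_distrib]
    apply Finset.sum_eq_zero; intro k _; ring
  have hc : (((∑ k, (X i₁ k - X i₂ k)) + (∑ k, (X i₂ k - X i₃ k))
      + (∑ k, (X i₃ k - X i₁ k)) : ℤ) : ZMod 2) = 0 := by rw [hzero]; simp
  rw [Int.cast_add, Int.cast_add, p12, p23, p31] at hc
  exact absurd hc (by decide)
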